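/- Let A > 0, V > 0, and B be real constants. For each δ > 0 let u_δ : [0,1] → ℝ be a C² function satisfying the ordinary differential equation (1/2)δA·u_δ''(x) + δB·u_δ'(x) − V·u_δ(x) = 0 for all x ∈ (0,1), with boundary conditions u_δ(0) = u_δ(1) = 1. Then lim_{δ→0⁺} δ^{1/2} u_δ'(0) = −√(2V/A). -/

import Mathlib

open MeasureTheory Filter Set Metric
open scoped Topology ENNReal NNReal

noncomputable section

abbrev Euc (d : ℕ) := EuclideanSpace ℝ (Fin d)

/-- The `i`-th partial derivative of `f` at `x`. -/
def pd {d : ℕ} (i : Fin d) (f : Euc d → ℝ) (x : Euc d) : ℝ :=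
  fderiv ℝ f x (EuclideanSpace.single i 1)

/-- The operator `L = (1/2) ∇·a∇ + b·∇`. -/
def opL {d : ℕ} (a : Euc d → Fin d → Fin d → ℝ) (b : Euc d → Fin d → ℝ)
    (f : Euc d → ℝ) (x : Euc d) : ℝ :=
  (1 / 2) * (∑ i, ∑ j, pd i (fun y => a y i j * pd j f y) x) + ∑ i, b x i * pd i f x

/-- The formal adjoint `L̃ = (1/2) ∇·a∇ − b·∇ − (∇·b)`. -/
def opLt {d : ℕ} (a : Euc d → Fin d → Fin d → ℝ) (b : Euc d → Fin d → ℝ)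
    (f : Euc d → ℝ) (x : Euc d) : ℝ :=
  (1 / 2) * (∑ i, ∑ j, pd i (fun y => a y i j * pd j f y) x) - ∑ i, b x i * pd i f x
    - (∑ i, pd i (fun y => b y i) x) * f x

/-- The inward unit normal vector determined by `Φ` (as a tuple of components). -/
def nvec {d : ℕ} (Φ : Euc d → ℝ) (x : Euc d) : Fin d → ℝ :=
  fun i => pd i Φ x / Real.sqrt (∑ j, (pd j Φ x) ^ 2)

/-- The quadratic form `n · a n`. -/
def nan {d : ℕ} (Φ : Euc d → ℝ) (a : Euc d → Fin d → Fin d → ℝ) (x : Euc d) : ℝ :=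
  ∑ i, ∑ j, nvec Φ x i * a x i j * nvec Φ x j

/-- `(a ∇ρ) · n`. -/

lemma mp_aux {δ A V B : ℝ} (hδ : 0 < δ) (hA : 0 < A) (hV : 0 < V)
    {w w1 w2 : ℝ → ℝ}
    (hc : ContinuousOn w (Icc 0 1))
    (hw : ∀ x ∈ Ioo (0:ℝ) 1, HasDerivAt w (w1 x) x)
    (hw1 : ∀ x ∈ Ioo (0:ℝ) 1, HasDerivAt w1 (w2 x) x)
    (hodew : ∀ x ∈ Ioo (0:ℝ) 1,
      (1/2) * δ * A * w2 x + δ * B * w1 x - V * w x = 0)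
    (h0 : w 0 = 0) (h1 : w 1 = 0) :
    ∀ x ∈ Icc (0:ℝ) 1, w x ≤ 0 := by
  obtain ⟨x0, hx0mem, hmax⟩ := isCompact_Icc.exists_isMaxOn
    (nonempty_Icc.2 zero_le_one) hc
  intro x hx
  have hle : w x ≤ w x0 := hmax hx
  by_contra hcon
  push_neg at hcon
  have hpos : 0 < w x0 := lt_of_lt_of_le hcon hle
  have hx0Ioo : x0 ∈ Ioo (0:ℝ) 1 := by
    rcases hx0mem with ⟨ha, hb⟩
    constructor
    · rcases ha.lt_or_eq with h | h
      · exact h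
      · exfalso; rw [← h, h0] at hpos; exact lt_irrefl 0 hpos
    · rcases hb.lt_or_eq with h | h
      · exact h
      · exfalso; rw [h, h1] at hpos; exact lt_irrefl 0 hpos
  have hmemN : Icc (0:ℝ) 1 ∈ 𝓝 x0 := Icc_mem_nhds hx0Ioo.1 hx0Ioo.2
  have hderiv0 : deriv w x0 = 0 := (hmax.isLocalMax hmemN).deriv_eq_zero
  have hw10 : w1 x0 = 0 := by
    rw [← (hw x0 hx0Ioo).deriv]; exact hderiv0
  have hw2pos : 0 < w2 x0 := by
    have h := hodew x0 hx0Ioo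
    rw [hw10] at h
    nlinarith [mul_pos hδ hA, mul_pos hV hpos]
  -- slope of w1 at x0 tends to w2 x0 > 0
  have hslope : Tendsto (slope w1 x0) (𝓝[≠] x0) (𝓝 (w2 x0)) :=
    hasDerivAt_iff_tendsto_slope.1 (hw1 x0 hx0Ioo)
  have hslope' : Tendsto (slope w1 x0) (𝓝[>] x0) (𝓝 (w2 x0)) :=
    hslope.mono_left (nhdsWithin_mono _ fun y hy => ne_of_gt hy)
  have hev1 : ∀ᶠ y in 𝓝[>] x0, 0 < slope w1 x0 y :=
    hslope'.eventually (eventually_gt_nhds hw2pos)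
  have hev2 : ∀ᶠ y in 𝓝[>] x0, y < 1 :=
    eventually_nhdsWithin_of_eventually_nhds (eventually_lt_nhds hx0Ioo.2)
  obtain ⟨b, hb, hsub⟩ := (nhdsGT_basis x0).eventually_iff.1 (hev1.and hev2)
  set t := (x0 + b) / 2 with ht
  have hx0t : x0 < t := by simp [ht]; linarith
  have htb : t < b := by simp [ht]; linarith
  have htIoo : t ∈ Ioo x0 b := ⟨hx0t, htb⟩
  have ht1 : t < 1 := (hsub htIoo).2
  have ht0 : (0:ℝ) ≤ t := le_of_lt (lt_trans hx0Ioo.1 hx0t)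
  have hmono : StrictMonoOn w (Icc x0 t) := by
    apply strictMonoOn_of_deriv_pos (convex_Icc x0 t)
    · exact hc.mono (Icc_subset_Icc hx0mem.1 ht1.le)
    · intro y hy
      rw [interior_Icc] at hy
      have hyIoo : y ∈ Ioo (0:ℝ) 1 :=
        ⟨lt_trans hx0Ioo.1 hy.1, lt_trans hy.2 ht1⟩
      rw [(hw y hyIoo).deriv]
      have hyb : y ∈ Ioo x0 b := ⟨hy.1, lt_trans hy.2 htb⟩
      have := (hsub hyb).1
      have hslope_eq : slope w1 x0 y = (w1 y - w1 x0) / (y - x0) := slope_def_field w1 x0 y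
      rw [hslope_eq, hw10, sub_zero] at this
      have hyx0 : 0 < y - x0 := sub_pos.2 hy.1
      calc (0:ℝ) = (w1 y / (y - x0)) * (y - x0) * 0 := by ring
        _ < w1 y := by
            have := mul_pos this hyx0
            rw [div_mul_cancel₀] at this
            · simpa using this
            · exact ne_of_gt hyx0
  have : w x0 < w t := hmono ⟨le_refl x0, hx0t.le⟩ ⟨hx0t.le, le_refl t⟩ hx0t
  have : w t ≤ w x0 := hmax ⟨ht0, ht1.le⟩
  linarith


noncomputable def rp (A V B δ : ℝ) : ℝ := (-(δ*B) + Real.sqrt (δ^2*B^2 + 2*δ*A*V))/(δ*A)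
noncomputable def rm (A V B δ : ℝ) : ℝ := (-(δ*B) - Real.sqrt (δ^2*B^2 + 2*δ*A*V))/(δ*A)
noncomputable def du0 (A V B δ : ℝ) : ℝ :=
  ((1 - Real.exp (rm A V B δ)) * rp A V B δ
    + (Real.exp (rp A V B δ) - 1) * rm A V B δ)
    / (Real.exp (rp A V B δ) - Real.exp (rm A V B δ))

lemma hasDerivAt_cexp (c r x : ℝ) :
    HasDerivAt (fun y => c * Real.exp (r*y)) (c * r * Real.exp (r*x)) x := by
  have h1 : HasDerivAt (fun y : ℝ => r * y) r x := by
    simpa using (hasDerivAt_id x).const_mul r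
  have h2 := (Real.hasDerivAt_exp (r*x)).comp x h1
  simpa [mul_comm, mul_assoc, mul_left_comm] using h2.const_mul c

lemma deriv_formula (A V B δ : ℝ) (hA : 0 < A) (hV : 0 < V) (hδ : 0 < δ)
    (u : ℝ → ℝ) (hu2 : ContDiffOn ℝ 2 u (Icc 0 1))
    (hode : ∀ x ∈ Ioo (0:ℝ) 1,
      (1 / 2) * δ * A * derivWithin (derivWithin u (Icc 0 1)) (Icc 0 1) x
        + δ * B * derivWithin u (Icc 0 1) x - V * u x = 0)
    (h0 : u 0 = 1) (h1 : u 1 = 1) :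
    derivWithin u (Icc 0 1) 0 = du0 A V B δ := by
  have hδA : 0 < δ * A := mul_pos hδ hA
  set D := Real.sqrt (δ^2*B^2 + 2*δ*A*V) with hDdef
  have hDpos : 0 < D := Real.sqrt_pos.2 (by positivity)
  have hD2 : D^2 = δ^2*B^2 + 2*δ*A*V := Real.sq_sqrt (by positivity)
  set r1 := rp A V B δ with hr1def
  set r2 := rm A V B δ with hr2def
  have e1 : δ*A*r1 = -(δ*B) + D := by
    rw [hr1def, rp]; field_simp
    rw [hDdef]; congr 2; ring
  have e2 : δ*A*r2 = -(δ*B) - D := by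
    rw [hr2def, rm]; field_simp
    rw [hDdef]; congr 2; ring
  have hroot1 : (1/2)*δ*A*r1^2 + δ*B*r1 - V = 0 := by
    have h2 : 2*(δ*A) * ((1/2)*δ*A*r1^2 + δ*B*r1 - V) = 0 := by
      linear_combination (δ*A*r1 + δ*B + D) * e1 + hD2
    rcases mul_eq_zero.1 h2 with h | h
    · exact absurd h (by positivity)
    · exact h
  have hroot2 : (1/2)*δ*A*r2^2 + δ*B*r2 - V = 0 := by
    have h2 : 2*(δ*A) * ((1/2)*δ*A*r2^2 + δ*B*r2 - V) = 0 := by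
      linear_combination (δ*A*r2 + δ*B - D) * e2 + hD2
    rcases mul_eq_zero.1 h2 with h | h
    · exact absurd h (by positivity)
    · exact h
  have hr21 : r2 < r1 := by
    rw [hr1def, hr2def, rp, rm]
    apply div_lt_div_of_pos_right _ hδA
    linarith
  have hden : 0 < Real.exp r1 - Real.exp r2 := sub_pos.2 (Real.exp_lt_exp.2 hr21)
  set c1 := (1 - Real.exp r2) / (Real.exp r1 - Real.exp r2) with hc1def
  set c2 := (Real.exp r1 - 1) / (Real.exp r1 - Real.exp r2) with hc2def
  set g : ℝ → ℝ := fun x => c1 * Real.exp (r1*x) + c2 * Real.exp (r2*x) with hgdef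
  set g1 : ℝ → ℝ := fun x => c1*r1 * Real.exp (r1*x) + c2*r2 * Real.exp (r2*x) with hg1def
  set g2 : ℝ → ℝ := fun x => c1*r1*r1 * Real.exp (r1*x) + c2*r2*r2 * Real.exp (r2*x) with hg2def
  have hg : ∀ x, HasDerivAt g (g1 x) x := fun x =>
    (hasDerivAt_cexp c1 r1 x).add (hasDerivAt_cexp c2 r2 x)
  have hg1 : ∀ x, HasDerivAt g1 (g2 x) x := by
    intro x
    have := (hasDerivAt_cexp (c1*r1) r1 x).add (hasDerivAt_cexp (c2*r2) r2 x)
    convert this using 1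
    all_goals rfl
  have hgcont : Continuous g := by
    fun_prop
  have hg0 : g 0 = 1 := by
    simp only [hgdef, mul_zero, Real.exp_zero, mul_one]
    rw [hc1def, hc2def]
    field_simp
    ring
  have hgone : g 1 = 1 := by
    simp only [hgdef, mul_one]
    rw [hc1def, hc2def]
    field_simp
    ring
  have hgode : ∀ x : ℝ, (1/2)*δ*A*g2 x + δ*B*g1 x - V * g x = 0 := by
    intro x
    simp only [hgdef, hg1def, hg2def]
    linear_combination (c1 * Real.exp (r1*x)) * hroot1 + (c2 * Real.exp (r2*x)) * hroot2
  -- conversion of the ODE for u to ordinary derivatives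
  have h2' : ContDiffOn ℝ 2 u (Ioo 0 1) := hu2.mono Ioo_subset_Icc_self
  have hdiffU : ∀ x ∈ Ioo (0:ℝ) 1, DifferentiableAt ℝ u x := fun x hx =>
    (h2'.differentiableOn two_ne_zero).differentiableAt (isOpen_Ioo.mem_nhds hx)
  have hd1 : ContDiffOn ℝ 1 (deriv u) (Ioo 0 1) :=
    h2'.deriv_of_isOpen isOpen_Ioo (by norm_num)
  have hdiffU' : ∀ x ∈ Ioo (0:ℝ) 1, DifferentiableAt ℝ (deriv u) x := fun x hx =>
    (hd1.differentiableOn one_ne_zero).differentiableAt (isOpen_Ioo.mem_nhds hx)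
  have hode' : ∀ x ∈ Ioo (0:ℝ) 1,
      (1/2)*δ*A*(deriv (deriv u) x) + δ*B*(deriv u x) - V * u x = 0 := by
    intro x hx
    have ha : derivWithin u (Icc 0 1) x = deriv u x :=
      derivWithin_of_mem_nhds (Icc_mem_nhds hx.1 hx.2)
    have hb : derivWithin (derivWithin u (Icc 0 1)) (Icc 0 1) x = deriv (deriv u) x := by
      rw [derivWithin_of_mem_nhds (Icc_mem_nhds hx.1 hx.2)]
      apply Filter.EventuallyEq.deriv_eq
      filter_upwards [isOpen_Ioo.mem_nhds hx] with y hy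
      exact derivWithin_of_mem_nhds (Icc_mem_nhds hy.1 hy.2)
    have := hode x hx
    rw [ha, hb] at this
    linarith
  -- u ≤ g on Icc via maximum principle
  have hle1 : ∀ x ∈ Icc (0:ℝ) 1, u x - g x ≤ 0 := by
    apply mp_aux (B := B) hδ hA hV (w1 := fun x => deriv u x - g1 x)
      (w2 := fun x => deriv (deriv u) x - g2 x)
    · exact hu2.continuousOn.sub hgcont.continuousOn
    · exact fun x hx => ((hdiffU x hx).hasDerivAt).sub (hg x)
    · exact fun x hx => ((hdiffU' x hx).hasDerivAt).sub (hg1 x)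
    · intro x hx
      linear_combination hode' x hx - hgode x
    · rw [h0, hg0]; ring
    · rw [h1, hgone]; ring
  have hle2 : ∀ x ∈ Icc (0:ℝ) 1, g x - u x ≤ 0 := by
    apply mp_aux (B := B) hδ hA hV (w1 := fun x => g1 x - deriv u x)
      (w2 := fun x => g2 x - deriv (deriv u) x)
    · exact hgcont.continuousOn.sub hu2.continuousOn
    · exact fun x hx => (hg x).sub ((hdiffU x hx).hasDerivAt)
    · exact fun x hx => (hg1 x).sub ((hdiffU' x hx).hasDerivAt)
    · intro x hx
      linear_combination hgode x - hode' x hx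
    · rw [h0, hg0]; ring
    · rw [h1, hgone]; ring
  have hEq : EqOn u g (Icc (0:ℝ) 1) := fun x hx =>
    le_antisymm (by linarith [hle1 x hx]) (by linarith [hle2 x hx])
  have h00 : (0:ℝ) ∈ Icc (0:ℝ) 1 := ⟨le_refl 0, zero_le_one⟩
  have hud : UniqueDiffWithinAt ℝ (Icc (0:ℝ) 1) 0 := (uniqueDiffOn_Icc zero_lt_one) 0 h00
  have hdg : derivWithin g (Icc (0:ℝ) 1) 0 = g1 0 :=
    ((hg 0).hasDerivWithinAt).derivWithin hud
  rw [derivWithin_congr hEq (hEq h00), hdg]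
  simp only [hg1def, mul_zero, Real.exp_zero, mul_one]
  rw [hc1def, hc2def, du0]
  rw [hr1def, hr2def] at *
  field_simp

lemma rm_lt_rp (A V B δ : ℝ) (hA : 0 < A) (hV : 0 < V) (hδ : 0 < δ) :
    rm A V B δ < rp A V B δ := by
  have hDpos : 0 < Real.sqrt (δ^2*B^2 + 2*δ*A*V) := Real.sqrt_pos.2 (by positivity)
  rw [rp, rm]
  apply div_lt_div_of_pos_right _ (mul_pos hδ hA)
  linarith

lemma sqrt_sqrt_key (A V B δ : ℝ) (hδ : 0 < δ) :
    Real.sqrt δ * Real.sqrt (δ^2*B^2 + 2*δ*A*V)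
      = δ * Real.sqrt (δ*B^2 + 2*A*V) := by
  rw [← Real.sqrt_mul hδ.le,
    show δ*(δ^2*B^2+2*δ*A*V) = δ^2 * (δ*B^2+2*A*V) by ring,
    Real.sqrt_mul (sq_nonneg δ), Real.sqrt_sq hδ.le]

lemma sqrt_mul_rp (A V B δ : ℝ) (hA : 0 < A) (hδ : 0 < δ) :
    Real.sqrt δ * rp A V B δ
      = (-Real.sqrt δ * B + Real.sqrt (δ*B^2 + 2*A*V)) / A := by
  rw [rp, show δ^2*B^2 + 2*δ*A*V = δ*(δ*B^2+2*A*V) by ring, Real.sqrt_mul hδ.le]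
  have hs := Real.mul_self_sqrt hδ.le
  rw [mul_div_assoc', div_eq_div_iff (mul_pos hδ hA).ne' hA.ne']
  linear_combination (A * Real.sqrt (δ*B^2 + 2*A*V)) * hs

lemma sqrt_mul_rm (A V B δ : ℝ) (hA : 0 < A) (hδ : 0 < δ) :
    Real.sqrt δ * rm A V B δ
      = (-Real.sqrt δ * B - Real.sqrt (δ*B^2 + 2*A*V)) / A := by
  rw [rm, show δ^2*B^2 + 2*δ*A*V = δ*(δ*B^2+2*A*V) by ring, Real.sqrt_mul hδ.le]
  have hs := Real.mul_self_sqrt hδ.le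
  rw [mul_div_assoc', div_eq_div_iff (mul_pos hδ hA).ne' hA.ne']
  linear_combination (-(A * Real.sqrt (δ*B^2 + 2*A*V))) * hs

lemma limit_du0 (A V B : ℝ) (hA : 0 < A) (hV : 0 < V) :
    Tendsto (fun δ => Real.sqrt δ * du0 A V B δ) (𝓝[>] (0:ℝ))
      (𝓝 (-Real.sqrt (2 * V / A))) := by
  set k := Real.sqrt (2 * V / A) with hkdef
  have hk : 0 < k := Real.sqrt_pos.2 (by positivity)
  set P : ℝ → ℝ := fun δ => (-Real.sqrt δ * B + Real.sqrt (δ*B^2 + 2*A*V)) / A with hPdef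
  set Q : ℝ → ℝ := fun δ => (-Real.sqrt δ * B - Real.sqrt (δ*B^2 + 2*A*V)) / A with hQdef
  have hkval : Real.sqrt (2*A*V) / A = k := by
    rw [hkdef, show (2*V/A) = (2*A*V)/A^2 by field_simp,
      Real.sqrt_div (by positivity), Real.sqrt_sq hA.le]
  have hPc : Continuous P := by
    apply Continuous.div_const
    fun_prop
  have hQc : Continuous Q := by
    apply Continuous.div_const
    fun_prop
  have hP0 : P 0 = k := by
    simp only [hPdef, Real.sqrt_zero, neg_zero, zero_mul, zero_add, mul_zero]
    exact hkval
  have hQ0 : Q 0 = -k := by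
    simp only [hQdef, Real.sqrt_zero, neg_zero, zero_mul, zero_sub, mul_zero, zero_add]
    rw [neg_div, hkval]
  have hP : Tendsto P (𝓝[>] (0:ℝ)) (𝓝 k) := by
    have := (hPc.tendsto 0).mono_left (nhdsWithin_le_nhds (s := Ioi (0:ℝ)))
    rwa [hP0] at this
  have hQ : Tendsto Q (𝓝[>] (0:ℝ)) (𝓝 (-k)) := by
    have := (hQc.tendsto 0).mono_left (nhdsWithin_le_nhds (s := Ioi (0:ℝ)))
    rwa [hQ0] at this
  have hsqrt : Tendsto Real.sqrt (𝓝[>] (0:ℝ)) (𝓝[>] (0:ℝ)) := by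
    apply tendsto_nhdsWithin_of_tendsto_nhds_of_eventually_within
    · have := (Real.continuous_sqrt.tendsto 0).mono_left
        (nhdsWithin_le_nhds (s := Ioi (0:ℝ)))
      rwa [Real.sqrt_zero] at this
    · filter_upwards [self_mem_nhdsWithin] with x hx
      exact Real.sqrt_pos.2 hx
  have hinv : Tendsto (fun δ => (Real.sqrt δ)⁻¹) (𝓝[>] (0:ℝ)) atTop :=
    tendsto_inv_nhdsGT_zero.comp hsqrt
  have hR1 : Tendsto (fun δ => rp A V B δ) (𝓝[>] (0:ℝ)) atTop := by
    apply Tendsto.congr' _ (hP.pos_mul_atTop hk hinv)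
    filter_upwards [self_mem_nhdsWithin] with δ hδ
    have hs : Real.sqrt δ ≠ 0 := ne_of_gt (Real.sqrt_pos.2 hδ)
    rw [show P δ = Real.sqrt δ * rp A V B δ from by
      rw [hPdef]; exact (sqrt_mul_rp A V B δ hA hδ).symm]
    field_simp
  have hR2 : Tendsto (fun δ => rm A V B δ) (𝓝[>] (0:ℝ)) atBot := by
    apply Tendsto.congr' _ (hQ.neg_mul_atTop (neg_neg_iff_pos.2 hk) hinv)
    filter_upwards [self_mem_nhdsWithin] with δ hδ
    have hs : Real.sqrt δ ≠ 0 := ne_of_gt (Real.sqrt_pos.2 hδ)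
    rw [show Q δ = Real.sqrt δ * rm A V B δ from by
      rw [hQdef]; exact (sqrt_mul_rm A V B δ hA hδ).symm]
    field_simp
  have hE2 : Tendsto (fun δ => Real.exp (rm A V B δ)) (𝓝[>] (0:ℝ)) (𝓝 0) :=
    Real.tendsto_exp_atBot.comp hR2
  have hE3 : Tendsto (fun δ => Real.exp (-rp A V B δ)) (𝓝[>] (0:ℝ)) (𝓝 0) :=
    Real.tendsto_exp_atBot.comp (tendsto_neg_atTop_atBot.comp hR1)
  have hE4 : Tendsto (fun δ => Real.exp (rm A V B δ - rp A V B δ)) (𝓝[>] (0:ℝ)) (𝓝 0) := by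
    apply Real.tendsto_exp_atBot.comp
    have := Filter.Tendsto.atBot_add_atBot hR2 (tendsto_neg_atTop_atBot.comp hR1)
    simpa [sub_eq_add_neg] using this
  -- the auxiliary expression G
  have hG : Tendsto (fun δ =>
      ((1 - Real.exp (rm A V B δ)) * (P δ * Real.exp (-rp A V B δ))
        + (1 - Real.exp (-rp A V B δ)) * Q δ)
        / (1 - Real.exp (rm A V B δ - rp A V B δ))) (𝓝[>] (0:ℝ)) (𝓝 (-k)) := by
    have hnum : Tendsto (fun δ =>
        (1 - Real.exp (rm A V B δ)) * (P δ * Real.exp (-rp A V B δ))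
          + (1 - Real.exp (-rp A V B δ)) * Q δ) (𝓝[>] (0:ℝ))
        (𝓝 ((1 - 0) * (k * 0) + (1 - 0) * (-k))) :=
      ((tendsto_const_nhds.sub hE2).mul (hP.mul hE3)).add
        ((tendsto_const_nhds.sub hE3).mul hQ)
    have hdenom : Tendsto (fun δ => 1 - Real.exp (rm A V B δ - rp A V B δ))
        (𝓝[>] (0:ℝ)) (𝓝 (1 - 0)) := tendsto_const_nhds.sub hE4
    have := hnum.div hdenom (by norm_num)
    convert this using 2
    all_goals norm_num
  apply Tendsto.congr' _ hG
  filter_upwards [self_mem_nhdsWithin] with δ hδ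
  have hδ' : (0:ℝ) < δ := hδ
  have hr21 := rm_lt_rp A V B δ hA hV hδ'
  have hden : 0 < Real.exp (rp A V B δ) - Real.exp (rm A V B δ) :=
    sub_pos.2 (Real.exp_lt_exp.2 hr21)
  have h1e : Real.exp (rm A V B δ - rp A V B δ) < 1 := by
    rw [Real.exp_lt_one_iff]; linarith
  have hPid := sqrt_mul_rp A V B δ hA hδ'
  have hQid := sqrt_mul_rm A V B δ hA hδ'
  have hPid' : P δ = Real.sqrt δ * rp A V B δ := by rw [hPdef]; exact hPid.symm
  have hQid' : Q δ = Real.sqrt δ * rm A V B δ := by rw [hQdef]; exact hQid.symm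
  rw [du0, hPid', hQid', Real.exp_sub, Real.exp_neg]
  have h1e' : (1:ℝ) - Real.exp (rm A V B δ) / Real.exp (rp A V B δ) ≠ 0 := by
    rw [← Real.exp_sub]; intro h; rw [sub_eq_zero] at h; rw [← h] at h1e; linarith
  field_simp [Real.exp_ne_zero, ne_of_gt hden]

def aGradN {d : ℕ} (Φ : Euc d → ℝ) (a : Euc d → Fin d → Fin d → ℝ)
    (ρ : Euc d → ℝ) (x : Euc d) : ℝ :=
  ∑ i, ∑ j, nvec Φ x i * a x i j * pd j ρ x

theorem one_dimensional_boundary_derivative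
    (A V B : ℝ) (hA : 0 < A) (hV : 0 < V)
    (u : ℝ → ℝ → ℝ)
    (hu2 : ∀ δ > (0:ℝ), ContDiffOn ℝ 2 (u δ) (Icc 0 1))
    (hode : ∀ δ > (0:ℝ), ∀ x ∈ Ioo (0:ℝ) 1,
      (1 / 2) * δ * A * derivWithin (derivWithin (u δ) (Icc 0 1)) (Icc 0 1) x
        + δ * B * derivWithin (u δ) (Icc 0 1) x - V * u δ x = 0)
    (hbc0 : ∀ δ > (0:ℝ), u δ 0 = 1) (hbc1 : ∀ δ > (0:ℝ), u δ 1 = 1) :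
    Tendsto (fun δ => Real.sqrt δ * derivWithin (u δ) (Icc (0:ℝ) 1) 0)
      (𝓝[>] (0:ℝ)) (𝓝 (-Real.sqrt (2 * V / A))) := by
  apply Tendsto.congr' _ (limit_du0 A V B hA hV)
  filter_upwards [self_mem_nhdsWithin] with δ hδ
  rw [deriv_formula A V B δ hA hV hδ (u δ) (hu2 δ hδ) (hode δ hδ) (hbc0 δ hδ) (hbc1 δ hδ)]
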